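/- Let Y = {Y_1,…,Y_s} be a partition of H, Z = {Z_1,…,Z_t} be a partition of N with Z_{k*} a block of Z of maximal size, and R a subgroup of Ω = {id, ρ_0}. Then the subgroup V(Y) × W(Z) × R of G = S_h × S_n × Ω is regular if and only if gcd( gcd(|Y_1|,…,|Y_s|), lcm((|Z_{k*}|)!, |R|) ) = 1. In particular, G itself is regular if and only if gcd(h, n!) = 1. -/

import Mathlib

/-!
Common framework: preferences on `n ≥ 2` alternatives (`Fin n`) expressed by `h ≥ 2`
individuals (`Fin h`).  Following the paper, a linear order `q ∈ L(N)` is identified with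
the permutation of `Fin n` sending each rank position (`0` = best) to the alternative
occupying that position.
-/

/-- A preference relation (a linear order on the set `Fin n` of alternatives), identified
with the permutation sending each rank position (`0` = best) to the alternative at
that position. -/
abbrev Pref (n : ℕ) := Equiv.Perm (Fin n)

/-- `x ⪰_q y` : alternative `x` is weakly preferred to `y` in `q`. -/
def prefGE {n : ℕ} (q : Pref n) (x y : Fin n) : Prop := q.symm x ≤ q.symm y

/-- `x ≻_q y` : alternative `x` is strictly preferred to `y` in `q`. -/
def prefGT {n : ℕ} (q : Pref n) (x y : Fin n) : Prop := q.symm x < q.symm y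

instance {n : ℕ} (q : Pref n) (x y : Fin n) : Decidable (prefGT q x y) :=
  inferInstanceAs (Decidable (q.symm x < q.symm y))

/-- A preference profile: one preference relation for each individual. -/
abbrev Profile (n h : ℕ) := Fin h → Pref n

/-- A social choice correspondence (the nonemptiness of its values is `IsSCC`). -/
abbrev SCC (n h : ℕ) := Profile n h → Set (Fin n)

/-- `C` has nonempty values, i.e. `C` really is a social choice correspondence. -/
def IsSCC {n h : ℕ} (C : SCC n h) : Prop := ∀ p, (C p).Nonempty

/-- `C` is resolute: it always selects exactly one alternative. -/
def Resolute {n h : ℕ} (C : SCC n h) : Prop := ∀ p, ∃ x, C p = {x}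

/-- `C'` is a refinement of `C`. -/
def Refines {n h : ℕ} (C' C : SCC n h) : Prop := ∀ p, C' p ⊆ C p

/-- The order-reversing permutation `ρ₀ : r ↦ n - r + 1`. -/
def rho0 (n : ℕ) : Equiv.Perm (Fin n) := Fin.revPerm

/-- The profile `p^{(id,id,ρ₀)}` obtained from `p` by reversing every individual
preference. -/
def revProfile {n h : ℕ} (p : Profile n h) : Profile n h := fun i => p i * rho0 n

/-- `C` is immune to the reversal bias. -/
def Immune {n h : ℕ} (C : SCC n h) : Prop :=
  ∀ (p : Profile n h) (x : Fin n), C p = {x} → C (revProfile p) ≠ C p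

/-- `Y` is a partition: nonempty, pairwise disjoint, covering blocks. -/
def IsPartition {α : Type*} {s : ℕ} (Y : Fin s → Finset α) : Prop :=
  (∀ j, (Y j).Nonempty) ∧ (∀ j k, j ≠ k → Disjoint (Y j) (Y k)) ∧ (∀ a, ∃ j, a ∈ Y j)

/-- The ambient group `S_h × S_n × S_n` (the third component is meant to range in `Ω`). -/
abbrev Amb (n h : ℕ) := Equiv.Perm (Fin h) × Equiv.Perm (Fin n) × Equiv.Perm (Fin n)

/-- The action `p ↦ p^g` of `g = (φ,ψ,ρ)` on profiles. -/
def gact {n h : ℕ} (g : Amb n h) (p : Profile n h) : Profile n h :=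
  fun i => g.2.1 * p (g.1⁻¹ i) * g.2.2

/-- The group `Ω = {id, ρ₀}`. -/
def OmegaGrp (n : ℕ) : Subgroup (Equiv.Perm (Fin n)) := Subgroup.zpowers (rho0 n)

/-- The group `G = S_h × S_n × Ω`. -/
def bigG (n h : ℕ) : Subgroup (Amb n h) :=
  (⊤ : Subgroup (Equiv.Perm (Fin h))).prod
    ((⊤ : Subgroup (Equiv.Perm (Fin n))).prod (OmegaGrp n))

/-- `U`-consistency of a social choice correspondence `C`: for every `p` and every
`(φ,ψ,ρ) ∈ U`, if `ρ = id` then `C(p^{(φ,ψ,id)}) = ψ C(p)`, and if `ρ = ρ₀` and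
`|C(p)| = 1` then `C(p^{(φ,ψ,ρ₀)}) ≠ ψ C(p)`. -/
def UConsistent {n h : ℕ} (U : Subgroup (Amb n h)) (C : SCC n h) : Prop :=
  ∀ (p : Profile n h), ∀ g ∈ U,
    (g.2.2 = 1 → C (gact g p) = g.2.1 '' C p) ∧
    (g.2.2 = rho0 n → ∀ x : Fin n, C p = {x} → C (gact g p) ≠ g.2.1 '' C p)

/-- A subgroup `U` of `G` is regular: for every profile `p` there is `ψ⋆ ∈ S_n`
conjugate to `ρ₀` with `Stab_U(p) ⊆ (S_h × {id} × {id}) ∪ (S_h × {ψ⋆} × {ρ₀})`. -/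
def RegularSubgroup {n h : ℕ} (U : Subgroup (Amb n h)) : Prop :=
  ∀ p : Profile n h, ∃ ψs : Equiv.Perm (Fin n), IsConj (rho0 n) ψs ∧
    ∀ g ∈ U, gact g p = p →
      (g.2.1 = 1 ∧ g.2.2 = 1) ∨ (g.2.1 = ψs ∧ g.2.2 = rho0 n)

/-- The subgroup of permutations preserving every block of the family `Y`
(this is `V(Y)`, resp. `W(Z)`, in the paper). -/
def permStab {α : Type*} [DecidableEq α] {s : ℕ} (Y : Fin s → Finset α) :
    Subgroup (Equiv.Perm α) where
  carrier := {φ | ∀ j, (Y j).image φ = Y j}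
  one_mem' := by intro j; simp
  mul_mem' := by
    intro a b ha hb j
    have h1 : (Y j).image ⇑(a * b) = ((Y j).image ⇑b).image ⇑a := by
      rw [Finset.image_image, Equiv.Perm.coe_mul]
    rw [h1, hb j, ha j]
  inv_mem' := by
    intro a ha j
    conv_lhs => rw [← ha j]
    rw [Finset.image_image]
    have h2 : (⇑a⁻¹ ∘ ⇑a) = id := by
      funext x; simp
    rw [h2, Finset.image_id]


/-! ### Auxiliary machinery for Statement 5 -/

section Statement5Aux

open Equiv Function

/-! #### Elementary arithmetic gadget: a "successor within blocks of size `q`" map on `ℕ` -/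

private def nxtFn (q r : ℕ) : ℕ := if (r + 1) % q = 0 then r + 1 - q else r + 1

private def prvFn (q r : ℕ) : ℕ := if r % q = 0 then r + q - 1 else r - 1

private lemma nxtFn_sub_mod {q r : ℕ} (hc : (r + 1) % q = 0) : (r + 1 - q) % q = 0 := by
  rcases Nat.eq_zero_or_pos q with rfl | hq
  · simpa using hc
  · have hq' : q ≤ r + 1 := Nat.le_of_dvd (Nat.succ_pos r) (Nat.dvd_of_mod_eq_zero hc)
    have h := Nat.add_mod_right (r + 1 - q) q
    rw [Nat.sub_add_cancel hq'] at h
    rw [← h]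
    exact hc

private lemma nxtFn_mod {q : ℕ} (hq : 0 < q) (r : ℕ) : nxtFn q r % q = (r + 1) % q := by
  unfold nxtFn
  split_ifs with hc
  · have hq' : q ≤ r + 1 := Nat.le_of_dvd (Nat.succ_pos r) (Nat.dvd_of_mod_eq_zero hc)
    rw [nxtFn_sub_mod hc, hc]
  · rfl

private lemma nxtFn_lt {q m r : ℕ} (hd : q ∣ m) (hr : r < m) : nxtFn q r < m := by
  unfold nxtFn
  split_ifs with hc
  · have hq0 : 0 < q := by
      rcases Nat.eq_zero_or_pos q with rfl | h
      · simp at hc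
      · exact h
    have hq' : q ≤ r + 1 := Nat.le_of_dvd (Nat.succ_pos r) (Nat.dvd_of_mod_eq_zero hc)
    omega
  · rcases Nat.lt_or_ge (r + 1) m with hlt | hge
    · exact hlt
    · exfalso
      have hm : r + 1 = m := by omega
      obtain ⟨a, rfl⟩ := hd
      exact hc (by rw [hm]; exact Nat.mul_mod_right q a)

private lemma prvFn_lt {q m r : ℕ} (hq : 0 < q) (hd : q ∣ m) (hr : r < m) : prvFn q r < m := by
  unfold prvFn
  split_ifs with hc
  · obtain ⟨b, hb⟩ := Nat.dvd_of_mod_eq_zero hc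
    obtain ⟨a, ha⟩ := hd
    have hba : b < a := by
      by_contra hle
      push_neg at hle
      have : m ≤ r := by rw [ha, hb]; exact Nat.mul_le_mul le_rfl hle
      omega
    have hle : r + q ≤ m := by
      have : q * (b + 1) ≤ q * a := Nat.mul_le_mul le_rfl hba
      rw [Nat.mul_succ] at this
      omega
    omega
  · omega

private lemma prvFn_nxtFn {q : ℕ} (hq : 0 < q) (r : ℕ) : prvFn q (nxtFn q r) = r := by
  unfold nxtFn
  split_ifs with hc
  · have hq' : q ≤ r + 1 := Nat.le_of_dvd (Nat.succ_pos r) (Nat.dvd_of_mod_eq_zero hc)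
    unfold prvFn
    rw [if_pos (nxtFn_sub_mod hc)]
    omega
  · unfold prvFn
    rw [if_neg hc]
    omega

private lemma nxtFn_prvFn {q : ℕ} (hq : 0 < q) (r : ℕ) : nxtFn q (prvFn q r) = r := by
  unfold prvFn
  split_ifs with hc
  · unfold nxtFn
    have h1 : r + q - 1 + 1 = r + q := by omega
    have h2 : (r + q) % q = 0 := by rw [Nat.add_mod_right]; exact hc
    rw [h1, if_pos h2]
    omega
  · unfold nxtFn
    have hr0 : r ≠ 0 := by rintro rfl; exact hc (Nat.zero_mod q)
    have h1 : r - 1 + 1 = r := by omega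
    rw [h1, if_neg hc]

/-! #### Basic facts about `rho0` and `OmegaGrp` -/

lemma rho0_mul_rho0 (n : ℕ) : rho0 n * rho0 n = 1 := by
  ext x
  simp [rho0]

lemma rho0_inv (n : ℕ) : (rho0 n)⁻¹ = rho0 n :=
  inv_eq_of_mul_eq_one_right (rho0_mul_rho0 n)

lemma rho0_ne_one {n : ℕ} (hn : 2 ≤ n) : rho0 n ≠ 1 := by
  intro hcon
  have h0 : (0 : ℕ) < n := by omega
  have h1 : (rho0 n) ⟨0, h0⟩ = (1 : Equiv.Perm (Fin n)) ⟨0, h0⟩ := by rw [hcon]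
  have h2 : ((rho0 n) ⟨0, h0⟩ : Fin n).val = n - 1 := by
    simp [rho0, Fin.rev]
  rw [h1] at h2
  simp at h2
  omega

lemma orderOf_rho0 {n : ℕ} (hn : 2 ≤ n) : orderOf (rho0 n) = 2 := by
  haveI : Fact (Nat.Prime 2) := ⟨Nat.prime_two⟩
  exact orderOf_eq_prime (by rw [pow_two]; exact rho0_mul_rho0 n) (rho0_ne_one hn)

lemma mem_omega_cases {n : ℕ} {ω : Equiv.Perm (Fin n)} (hω : ω ∈ OmegaGrp n) :
    ω = 1 ∨ ω = rho0 n := by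
  rw [OmegaGrp, Subgroup.mem_zpowers_iff] at hω
  obtain ⟨k, hk⟩ := hω
  have h2 : (rho0 n) ^ (2 : ℤ) = 1 := by rw [zpow_two]; exact rho0_mul_rho0 n
  rcases Int.even_or_odd k with ⟨m, hm⟩ | ⟨m, hm⟩
  · left; rw [← hk, hm, ← two_mul, zpow_mul, h2, one_zpow]
  · right; rw [← hk, hm, zpow_add, zpow_mul, h2, one_zpow, one_mul, zpow_one]

lemma card_omega {n : ℕ} (hn : 2 ≤ n) : Nat.card (OmegaGrp n) = 2 := by
  rw [OmegaGrp, Nat.card_zpowers, orderOf_rho0 hn]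

/-! #### Partitions and `permStab` -/

lemma IsPartition.block_unique {α : Type*} {s : ℕ} {Y : Fin s → Finset α}
    (hY : IsPartition Y) {x : α} {j k : Fin s} (hj : x ∈ Y j) (hk : x ∈ Y k) : j = k := by
  by_contra hne
  exact (Finset.disjoint_left.mp (hY.2.1 j k hne) hj) hk

lemma mem_permStab {α : Type*} [DecidableEq α] {s : ℕ} {Y : Fin s → Finset α}
    {φ : Equiv.Perm α} : φ ∈ permStab Y ↔ ∀ j, (Y j).image ⇑φ = Y j := Iff.rfl

lemma invariant_apply_mem {α : Type*} [DecidableEq α] {φ : Equiv.Perm α} {S : Finset α}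
    (hS : S.image ⇑φ = S) {x : α} (hx : x ∈ S) : φ x ∈ S := by
  rw [← hS]; exact Finset.mem_image_of_mem _ hx

lemma invariant_pow_apply_mem {α : Type*} [DecidableEq α] {φ : Equiv.Perm α} {S : Finset α}
    (hS : S.image ⇑φ = S) {x : α} (hx : x ∈ S) (i : ℕ) : (φ ^ i) x ∈ S := by
  induction i with
  | zero => simpa
  | succ i ih =>
    have hstep : (φ ^ (i + 1)) x = φ ((φ ^ i) x) := by
      rw [pow_succ', Equiv.Perm.mul_apply]
    rw [hstep]
    exact invariant_apply_mem hS ih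

/-- Any block-preserving permutation `ψ ∈ W(Z)` satisfies `ψ^(m!) = 1` whenever all blocks
have size at most `m`. -/
lemma permStab_pow_factorial {n t : ℕ} {Z : Fin t → Finset (Fin n)} (hZ : IsPartition Z)
    {ψ : Equiv.Perm (Fin n)} (hψ : ψ ∈ permStab Z) {m : ℕ} (hm : ∀ k, (Z k).card ≤ m) :
    ψ ^ m.factorial = 1 := by
  apply Equiv.ext
  intro x
  show (ψ ^ m.factorial) x = x
  obtain ⟨k, hk⟩ := hZ.2.2 x
  have hmem : ∀ i : ℕ, (ψ ^ i) x ∈ Z k := fun i => invariant_pow_apply_mem (hψ k) hk i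
  have main : ∀ u v : ℕ, u < v → v ≤ m → (ψ ^ u) x = (ψ ^ v) x → (ψ ^ m.factorial) x = x := by
    intro u v huv hvm heq
    have hfix : (ψ ^ (v - u)) x = x := by
      have h1 : (ψ ^ v) x = (ψ ^ u) ((ψ ^ (v - u)) x) := by
        rw [← Equiv.Perm.mul_apply, ← pow_add, Nat.add_sub_cancel' (le_of_lt huv)]
      rw [← heq] at h1
      exact ((ψ ^ u).injective h1).symm
    obtain ⟨e, he⟩ : (v - u) ∣ m.factorial := Nat.dvd_factorial (by omega) (by omega)
    rw [he, pow_mul]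
    simpa [Equiv.Perm.coe_pow] using Function.iterate_fixed hfix e
  have hcard : (Z k).card < (Finset.univ : Finset (Fin (m + 1))).card := by
    rw [Finset.card_univ, Fintype.card_fin]
    exact Nat.lt_succ_of_le (hm k)
  obtain ⟨a, -, b, -, hab, heq⟩ :=
    Finset.exists_ne_map_eq_of_card_lt_of_maps_to (f := fun i : Fin (m + 1) => (ψ ^ (i : ℕ)) x)
      hcard (fun i _ => hmem (i : ℕ))
  rcases Nat.lt_trichotomy (a : ℕ) (b : ℕ) with hlt | heqv | hgt
  · exact main (a : ℕ) (b : ℕ) hlt (by omega) heq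
  · exact absurd (Fin.ext heqv) hab
  · exact main (b : ℕ) (a : ℕ) hgt (by omega) heq.symm

/-- If `d` divides the length of every `φ`-orbit meeting an invariant finite set `S`, then
`d` divides `|S|`. -/
lemma dvd_card_of_dvd_minimalPeriod {α : Type*} [DecidableEq α] [Fintype α] {d : ℕ}
    (φ : Equiv.Perm α) :
    ∀ S : Finset α, S.image ⇑φ = S → (∀ x ∈ S, d ∣ Function.minimalPeriod ⇑φ x) →
      d ∣ S.card := by
  intro S
  induction S using Finset.strongInduction with
  | _ S ih =>
    intro hS hd
    rcases S.eq_empty_or_nonempty with rfl | ⟨x, hx⟩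
    · simp
    · set ℓ := Function.minimalPeriod ⇑φ x with hℓdef
      have hper : x ∈ Function.periodicPts ⇑φ := by
        refine ⟨orderOf φ, orderOf_pos φ, ?_⟩
        show (⇑φ)^[orderOf φ] x = x
        rw [← Equiv.Perm.coe_pow, pow_orderOf_eq_one]; rfl
      have hℓpos : 0 < ℓ := Function.minimalPeriod_pos_of_mem_periodicPts hper
      have hfixℓ : (φ ^ ℓ) x = x := by
        have h := Function.isPeriodicPt_minimalPeriod ⇑φ x
        rw [Equiv.Perm.coe_pow]; exact h
      have hstep : ∀ i : ℕ, φ ((φ ^ i) x) = (φ ^ (i + 1)) x := by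
        intro i; rw [pow_succ', Equiv.Perm.mul_apply]
      set O : Finset α := Finset.image (fun k : Fin ℓ => (φ ^ (k : ℕ)) x) Finset.univ with hO
      have hxO : x ∈ O := by
        refine Finset.mem_image.mpr ⟨⟨0, hℓpos⟩, Finset.mem_univ _, ?_⟩
        simp
      have hOS : O ⊆ S := by
        intro y hy
        obtain ⟨k, -, rfl⟩ := Finset.mem_image.mp hy
        exact invariant_pow_apply_mem hS hx _
      have hinj : Function.Injective (fun k : Fin ℓ => (φ ^ (k : ℕ)) x) := by
        intro a b hab
        refine Fin.ext ?_
        refine Function.iterate_injOn_Iio_minimalPeriod (f := ⇑φ) (x := x) a.isLt b.isLt ?_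
        simpa [Equiv.Perm.coe_pow] using hab
      have hcardO : O.card = ℓ := by
        rw [hO, Finset.card_image_of_injective _ hinj, Finset.card_univ, Fintype.card_fin]
      have hOinv : O.image ⇑φ = O := by
        apply Finset.eq_of_subset_of_card_le
        · intro y hy
          obtain ⟨z, hz, rfl⟩ := Finset.mem_image.mp hy
          obtain ⟨k, -, rfl⟩ := Finset.mem_image.mp hz
          rw [hstep]
          by_cases hk1 : (k : ℕ) + 1 < ℓ
          · exact Finset.mem_image.mpr ⟨⟨(k : ℕ) + 1, hk1⟩, Finset.mem_univ _, rfl⟩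
          · have hk2 : (k : ℕ) + 1 = ℓ := by have := k.isLt; omega
            rw [hk2, hfixℓ]
            exact hxO
        · rw [Finset.card_image_of_injective _ φ.injective]
      have hSO : (S \ O).image ⇑φ = S \ O := by
        rw [Finset.image_sdiff _ _ φ.injective, hS, hOinv]
      have hssub : S \ O ⊂ S := Finset.sdiff_ssubset hOS ⟨x, hxO⟩
      have hd' : d ∣ (S \ O).card :=
        ih (S \ O) hssub hSO (fun y hy => hd y (Finset.mem_sdiff.mp hy).1)
      have hdO : d ∣ O.card := by rw [hcardO]; exact hd x hx
      have hcards := Finset.card_sdiff_add_card_eq_card hOS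
      rw [← hcards]
      exact dvd_add hd' hdO

/-! #### Profile relations -/

lemma profile_pow_rel {n h : ℕ} {p : Profile n h} {φ : Equiv.Perm (Fin h)}
    {ψ ρ : Equiv.Perm (Fin n)} (hrel : ∀ j, p (φ j) = ψ * p j * ρ) (k : ℕ) (j : Fin h) :
    p ((φ ^ k) j) = ψ ^ k * p j * ρ ^ k := by
  induction k with
  | zero => simp
  | succ k ih =>
    have h1 : (φ ^ (k + 1)) j = φ ((φ ^ k) j) := by rw [pow_succ', Equiv.Perm.mul_apply]
    rw [h1, hrel, ih, pow_succ' ψ k, pow_succ ρ k]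
    group

lemma gact_rel {n h : ℕ} {p : Profile n h} {g : Amb n h} (hg : gact g p = p) (j : Fin h) :
    p (g.1 j) = g.2.1 * p j * g.2.2 := by
  have h1 := congrFun hg (g.1 j)
  simp only [gact] at h1
  rw [← Equiv.Perm.mul_apply, inv_mul_cancel, Equiv.Perm.one_apply] at h1
  exact h1.symm

lemma gact_of_rel {n h : ℕ} {p : Profile n h} {φ : Equiv.Perm (Fin h)}
    {ψ ρ : Equiv.Perm (Fin n)} (hrel : ∀ j, p (φ j) = ψ * p j * ρ) :
    gact (φ, ψ, ρ) p = p := by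
  funext i
  show ψ * p (φ⁻¹ i) * ρ = p i
  have h1 := hrel (φ⁻¹ i)
  rw [← Equiv.Perm.mul_apply, mul_inv_cancel, Equiv.Perm.one_apply] at h1
  exact h1.symm

/-- Core of the regularity proof: if the gcd condition holds and a stabilizing element has
trivial third component, then its second component is trivial. -/
lemma psi_eq_one_of_rel {h n s t : ℕ}
    {Y : Fin s → Finset (Fin h)}
    {Z : Fin t → Finset (Fin n)} (hZ : IsPartition Z)
    {kstar : Fin t} (hks : ∀ k, (Z k).card ≤ (Z kstar).card) {c : ℕ}
    (hgcd : Nat.gcd (Finset.univ.gcd fun j => (Y j).card)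
      (Nat.lcm (Nat.factorial (Z kstar).card) c) = 1)
    {p : Profile n h} {φ : Equiv.Perm (Fin h)} {ψ : Equiv.Perm (Fin n)}
    (hφ : φ ∈ permStab Y) (hψ : ψ ∈ permStab Z)
    (hrel : ∀ j, p (φ j) = ψ * p j) : ψ = 1 := by
  have hd1 : orderOf ψ ∣ (Z kstar).card.factorial :=
    orderOf_dvd_of_pow_eq_one (permStab_pow_factorial hZ hψ hks)
  have hdY : ∀ j, orderOf ψ ∣ (Y j).card := by
    intro j
    refine dvd_card_of_dvd_minimalPeriod φ (Y j) (hφ j) ?_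
    intro x _
    set ℓ := Function.minimalPeriod ⇑φ x with hℓdef
    have hfix : (φ ^ ℓ) x = x := by
      have h := Function.isPeriodicPt_minimalPeriod ⇑φ x
      rw [Equiv.Perm.coe_pow]; exact h
    have hiter := profile_pow_rel (ρ := 1) (fun j => by rw [mul_one]; exact hrel j) ℓ x
    rw [hfix, one_pow, mul_one] at hiter
    have hψℓ : ψ ^ ℓ = 1 := mul_eq_right.mp hiter.symm
    exact orderOf_dvd_of_pow_eq_one hψℓ
  have hdvd : orderOf ψ ∣ Nat.gcd (Finset.univ.gcd fun j => (Y j).card)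
      (Nat.lcm (Nat.factorial (Z kstar).card) c) :=
    Nat.dvd_gcd (Finset.dvd_gcd fun j _ => hdY j) (hd1.trans (Nat.dvd_lcm_left _ _))
  rw [hgcd] at hdvd
  exact orderOf_eq_one_iff.mp (Nat.dvd_one.mp hdvd)

/-! #### Constructions for the necessity direction -/

/-- Given `q ∣ |Y_j|` for every block, there is a block-preserving permutation `φ` together
with a "height function" `f` increasing by `1 (mod q)` along `φ`. -/
lemma exists_phi {h' s : ℕ} {Y : Fin s → Finset (Fin h')} (hY : IsPartition Y) (q : ℕ)
    (hq : 0 < q) (hdvd : ∀ j, q ∣ (Y j).card) :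
    ∃ (φ : Equiv.Perm (Fin h')) (f : Fin h' → ℕ), φ ∈ permStab Y ∧
      ∀ x, f (φ x) % q = (f x + 1) % q := by
  classical
  have hex : ∀ x : Fin h', x ∈ Y (hY.2.2 x).choose := fun x => (hY.2.2 x).choose_spec
  set blk : Fin h' → Fin s := fun x => (hY.2.2 x).choose with hblkdef
  have blk_eq : ∀ {x : Fin h'} {j}, x ∈ Y j → blk x = j := fun {x j} hx =>
    hY.block_unique (hex x) hx
  set F : (j : Fin s) → Fin (Y j).card → Fin h' :=
    fun j r => ((Y j).equivFin.symm r : Fin h') with hFdef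
  have hF_mem : ∀ j r, F j r ∈ Y j := fun j r => ((Y j).equivFin.symm r).2
  set pos : Fin h' → ℕ := fun x => ((Y (blk x)).equivFin ⟨x, hex x⟩ : ℕ) with hposdef
  have pos_lt : ∀ x, pos x < (Y (blk x)).card := fun x => ((Y (blk x)).equivFin ⟨x, hex x⟩).isLt
  have pos_eq : ∀ (x : Fin h') (j) (hx : x ∈ Y j), pos x = ((Y j).equivFin ⟨x, hx⟩ : ℕ) := by
    intro x j hx
    have hb : blk x = j := blk_eq hx
    subst hb
    rfl
  have hpos_F : ∀ j r, pos (F j r) = (r : ℕ) := by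
    intro j r
    rw [pos_eq (F j r) j (hF_mem j r)]
    have hsub : (⟨F j r, hF_mem j r⟩ : {a // a ∈ Y j}) = (Y j).equivFin.symm r :=
      Subtype.ext rfl
    rw [hsub, Equiv.apply_symm_apply]
  have hF_self : ∀ (j) (x : Fin h') (hx : x ∈ Y j) (hlt : pos x < (Y j).card),
      F j ⟨pos x, hlt⟩ = x := by
    intro j x hx hlt
    have hb : blk x = j := blk_eq hx
    subst hb
    show ((Y (blk x)).equivFin.symm ⟨pos x, hlt⟩ : Fin h') = x
    have hfin : (⟨pos x, hlt⟩ : Fin (Y (blk x)).card) = (Y (blk x)).equivFin ⟨x, hex x⟩ := by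
      apply Fin.ext; rfl
    rw [hfin, Equiv.symm_apply_apply]
  have hnxt_lt : ∀ x : Fin h', nxtFn q (pos x) < (Y (blk x)).card :=
    fun x => nxtFn_lt (hdvd (blk x)) (pos_lt x)
  have hprv_lt : ∀ x : Fin h', prvFn q (pos x) < (Y (blk x)).card :=
    fun x => prvFn_lt hq (hdvd (blk x)) (pos_lt x)
  set toF : Fin h' → Fin h' := fun x => F (blk x) ⟨nxtFn q (pos x), hnxt_lt x⟩ with htoFdef
  set invF : Fin h' → Fin h' := fun x => F (blk x) ⟨prvFn q (pos x), hprv_lt x⟩ with hinvFdef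
  have htoF_mem : ∀ x, toF x ∈ Y (blk x) := fun x => hF_mem _ _
  have hinvF_mem : ∀ x, invF x ∈ Y (blk x) := fun x => hF_mem _ _
  have hblk_toF : ∀ x, blk (toF x) = blk x := fun x => blk_eq (htoF_mem x)
  have hblk_invF : ∀ x, blk (invF x) = blk x := fun x => blk_eq (hinvF_mem x)
  have hpos_toF : ∀ x, pos (toF x) = nxtFn q (pos x) := fun x => hpos_F _ _
  have hpos_invF : ∀ x, pos (invF x) = prvFn q (pos x) := fun x => hpos_F _ _
  have hF_congr : ∀ (j j' : Fin s) (_ : j = j') (r : Fin (Y j).card) (r' : Fin (Y j').card),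
      (r : ℕ) = (r' : ℕ) → F j r = F j' r' := by
    rintro j j' rfl r r' hrr
    congr 1
    exact Fin.ext hrr
  have hleft : ∀ x, invF (toF x) = x := by
    intro x
    have h1 : invF (toF x) = F (blk x) ⟨pos x, pos_lt x⟩ := by
      show F (blk (toF x)) ⟨prvFn q (pos (toF x)), hprv_lt (toF x)⟩ = F (blk x) ⟨pos x, pos_lt x⟩
      refine hF_congr _ _ (hblk_toF x) _ _ ?_
      show prvFn q (pos (toF x)) = pos x
      rw [hpos_toF x, prvFn_nxtFn hq]
    rw [h1, hF_self (blk x) x (hex x) (pos_lt x)]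
  have hright : ∀ x, toF (invF x) = x := by
    intro x
    have h1 : toF (invF x) = F (blk x) ⟨pos x, pos_lt x⟩ := by
      show F (blk (invF x)) ⟨nxtFn q (pos (invF x)), hnxt_lt (invF x)⟩ = F (blk x) ⟨pos x, pos_lt x⟩
      refine hF_congr _ _ (hblk_invF x) _ _ ?_
      show nxtFn q (pos (invF x)) = pos x
      rw [hpos_invF x, nxtFn_prvFn hq]
    rw [h1, hF_self (blk x) x (hex x) (pos_lt x)]
  refine ⟨⟨toF, invF, hleft, hright⟩, pos, ?_, ?_⟩
  · intro j
    apply Finset.eq_of_subset_of_card_le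
    · intro y hy
      obtain ⟨x, hx, rfl⟩ := Finset.mem_image.mp hy
      have hmem : toF x ∈ Y (blk x) := htoF_mem x
      rwa [blk_eq hx] at hmem
    · rw [Finset.card_image_of_injective _ (Equiv.injective ⟨toF, invF, hleft, hright⟩)]
  · intro x
    show pos (toF x) % q = (pos x + 1) % q
    rw [hpos_toF x, nxtFn_mod hq]

open Fin.NatCast in
/-- Given `2 ≤ q ≤ |Z_{k*}|`, there is a nontrivial block-preserving `ψ` with `ψ^q = 1`. -/
lemma exists_psi {n t : ℕ} {Z : Fin t → Finset (Fin n)} (hZ : IsPartition Z) (kstar : Fin t)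
    {q : ℕ} (hq2 : 2 ≤ q) (hqc : q ≤ (Z kstar).card) :
    ∃ ψ : Equiv.Perm (Fin n), ψ ∈ permStab Z ∧ ψ ≠ 1 ∧ ψ ^ q = 1 := by
  classical
  obtain ⟨S, hSsub, hScard⟩ := Finset.exists_subset_card_eq hqc
  obtain ⟨m, rfl⟩ : ∃ m, q = m + 2 := ⟨q - 2, by omega⟩
  let e : Fin (m + 2) ≃ {x : Fin n // x ∈ S} := ((S.equivFin).trans (finCongr hScard)).symm
  set σ : Equiv.Perm (Fin (m + 2)) := finRotate (m + 2) with hσdef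
  have hσq : σ ^ (m + 2) = 1 := by
    ext i
    have hpow : ∀ k : ℕ, (σ ^ k) i = i + (k : Fin (m + 2)) := by
      intro k
      induction k with
      | zero => simp
      | succ k ih =>
        have h1 : (σ ^ (k + 1)) i = σ ((σ ^ k) i) := by rw [pow_succ', Equiv.Perm.mul_apply]
        rw [h1, ih]
        show finRotate (m + 2) _ = _
        rw [finRotate_succ_apply]
        push_cast
        rw [add_assoc]
    rw [hpow (m + 2)]
    simp
  have hσne : σ ≠ 1 := by
    intro hcon
    have h0 : σ 0 = 0 := by rw [hcon]; rfl
    have h1 : σ 0 = 1 := by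
      show finRotate (m + 2) 0 = 1
      rw [finRotate_succ_apply, zero_add]
    rw [h0] at h1
    have h2 := congrArg Fin.val h1
    simp at h2
  set ψ : Equiv.Perm (Fin n) := σ.extendDomain e with hψdef
  have hψq : ψ ^ (m + 2) = 1 := by
    rw [hψdef, ← Equiv.Perm.extendDomain_pow, hσq, Equiv.Perm.extendDomain_one]
  have hψne : ψ ≠ 1 := fun hcon => hσne (Equiv.Perm.extendDomain_eq_one_iff.mp hcon)
  have hψS : ∀ x ∈ S, ψ x ∈ S := by
    intro x hx
    rw [hψdef, Equiv.Perm.extendDomain_apply_subtype σ e hx]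
    exact (e (σ (e.symm ⟨x, hx⟩))).2
  have hψfix : ∀ x, x ∉ S → ψ x = x := fun x hx =>
    Equiv.Perm.extendDomain_apply_not_subtype σ e hx
  refine ⟨ψ, ?_, hψne, hψq⟩
  intro k
  apply Finset.eq_of_subset_of_card_le
  · intro y hy
    obtain ⟨x, hx, rfl⟩ := Finset.mem_image.mp hy
    by_cases hxS : x ∈ S
    · have hk : k = kstar := hZ.block_unique hx (hSsub hxS)
      subst hk
      exact hSsub (hψS x hxS)
    · rw [hψfix x hxS]; exact hx
  · rw [Finset.card_image_of_injective _ ψ.injective]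

/-! #### The main characterization -/

theorem key_regular {h n s t : ℕ} (hn : 2 ≤ n)
    (Y : Fin s → Finset (Fin h)) (hY : IsPartition Y)
    (Z : Fin t → Finset (Fin n)) (hZ : IsPartition Z)
    (kstar : Fin t) (hks : ∀ k, (Z k).card ≤ (Z kstar).card)
    (R : Subgroup (Equiv.Perm (Fin n))) (hR : R ≤ OmegaGrp n) :
    RegularSubgroup ((permStab Y).prod ((permStab Z).prod R)) ↔
      Nat.gcd (Finset.univ.gcd fun j => (Y j).card)
        (Nat.lcm (Nat.factorial (Z kstar).card) (Nat.card R)) = 1 := by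
  constructor
  · -- regular → gcd = 1
    intro hreg
    by_contra hgcd
    obtain ⟨q, hqprime, hqdvd⟩ := Nat.exists_prime_and_dvd hgcd
    have hqY : ∀ j, q ∣ (Y j).card := fun j =>
      (hqdvd.trans (Nat.gcd_dvd_left _ _)).trans (Finset.gcd_dvd (Finset.mem_univ j))
    have hqlcm : q ∣ Nat.lcm (Nat.factorial (Z kstar).card) (Nat.card R) :=
      hqdvd.trans (Nat.gcd_dvd_right _ _)
    have hqprod : q ∣ (Z kstar).card.factorial * Nat.card R :=
      hqlcm.trans (Nat.lcm_dvd_mul _ _)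
    rcases (Nat.Prime.dvd_mul hqprime).mp hqprod with hA | hB
    · -- q ∣ (|Z kstar|)!
      have hqle : q ≤ (Z kstar).card := (Nat.Prime.dvd_factorial hqprime).mp hA
      obtain ⟨ψ, hψZ, hψne, hψq⟩ := exists_psi hZ kstar hqprime.two_le hqle
      obtain ⟨φ, f, hφY, hf⟩ := exists_phi hY q hqprime.pos hqY
      set p : Profile n h := fun i => ψ ^ (f i) with hp
      have hrel : ∀ j, p (φ j) = ψ * p j * 1 := by
        intro j
        rw [mul_one]
        show ψ ^ (f (φ j)) = ψ * ψ ^ (f j)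
        rw [← pow_succ']
        apply pow_eq_pow_iff_modEq.mpr
        exact Nat.ModEq.of_dvd (orderOf_dvd_of_pow_eq_one hψq) (hf j)
      obtain ⟨ψs, hconj, hall⟩ := hreg p
      have hmem : ((φ, ψ, 1) : Amb n h) ∈ (permStab Y).prod ((permStab Z).prod R) :=
        Subgroup.mem_prod.mpr ⟨hφY, Subgroup.mem_prod.mpr ⟨hψZ, one_mem R⟩⟩
      rcases hall (φ, ψ, 1) hmem (gact_of_rel hrel) with ⟨h1, -⟩ | ⟨-, h2⟩
      · exact hψne h1
      · exact rho0_ne_one hn h2.symm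
    · -- q ∣ |R|, so q = 2 and rho0 ∈ R
      have hcard2 : Nat.card R ∣ 2 := by
        have hdvd := Subgroup.card_dvd_of_le hR
        rwa [card_omega hn] at hdvd
      have hq2 : q = 2 :=
        (Nat.prime_dvd_prime_iff_eq hqprime Nat.prime_two).mp (hB.trans hcard2)
      subst hq2
      have hrho_mem : rho0 n ∈ R := by
        rcases Subgroup.bot_or_exists_ne_one R with hbot | ⟨x, hxR, hx1⟩
        · rw [hbot, Subgroup.card_bot] at hB
          exact absurd (Nat.dvd_one.mp hB) (by norm_num)
        · rcases mem_omega_cases (hR hxR) with h1 | h1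
          · exact absurd h1 hx1
          · rwa [← h1]
      obtain ⟨φ, f, hφY, hf⟩ := exists_phi hY 2 (by norm_num) hqY
      set p : Profile n h := fun i => (rho0 n) ^ (f i) with hp
      have hrel : ∀ j, p (φ j) = 1 * p j * rho0 n := by
        intro j
        rw [one_mul]
        show (rho0 n) ^ (f (φ j)) = (rho0 n) ^ (f j) * rho0 n
        rw [← pow_succ]
        apply pow_eq_pow_iff_modEq.mpr
        refine Nat.ModEq.of_dvd (orderOf_dvd_of_pow_eq_one ?_) (hf j)
        rw [pow_two]; exact rho0_mul_rho0 n
      obtain ⟨ψs, hconj, hall⟩ := hreg p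
      have hmem : ((φ, 1, rho0 n) : Amb n h) ∈ (permStab Y).prod ((permStab Z).prod R) :=
        Subgroup.mem_prod.mpr ⟨hφY, Subgroup.mem_prod.mpr ⟨one_mem _, hrho_mem⟩⟩
      rcases hall (φ, 1, rho0 n) hmem (gact_of_rel hrel) with ⟨-, h2⟩ | ⟨h1, -⟩
      · exact rho0_ne_one hn h2
      · rw [← h1] at hconj
        obtain ⟨c, hc⟩ := isConj_iff.mp hconj
        apply rho0_ne_one hn
        calc rho0 n = c⁻¹ * (c * rho0 n * c⁻¹) * c := by group
          _ = c⁻¹ * 1 * c := by rw [hc]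
          _ = 1 := by group
  · -- gcd = 1 → regular
    intro hgcd p
    have keyA : ∀ (φ : Equiv.Perm (Fin h)) (ψ : Equiv.Perm (Fin n)), φ ∈ permStab Y →
        ψ ∈ permStab Z → (∀ j, p (φ j) = ψ * p j) → ψ = 1 :=
      fun φ ψ hφ hψ hrel => psi_eq_one_of_rel hZ hks hgcd hφ hψ hrel
    by_cases hex : ∃ g : Amb n h, g ∈ (permStab Y).prod ((permStab Z).prod R) ∧
        gact g p = p ∧ g.2.2 = rho0 n
    · obtain ⟨g0, hg0U, hg0s, hg0ρ⟩ := hex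
      have hmem0 := Subgroup.mem_prod.mp hg0U
      have hφ0 : g0.1 ∈ permStab Y := hmem0.1
      have hψ0Z : g0.2.1 ∈ permStab Z := (Subgroup.mem_prod.mp hmem0.2).1
      have rel0 : ∀ j, p (g0.1 j) = g0.2.1 * p j * rho0 n := by
        intro j
        have h1 := gact_rel hg0s j
        rwa [hg0ρ] at h1
      have hsq : g0.2.1 * g0.2.1 = 1 := by
        apply keyA (g0.1 * g0.1) _ (mul_mem hφ0 hφ0) (mul_mem hψ0Z hψ0Z)
        intro j
        rw [Equiv.Perm.mul_apply, rel0, rel0]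
        calc g0.2.1 * (g0.2.1 * p j * rho0 n) * rho0 n
            = g0.2.1 * g0.2.1 * p j * (rho0 n * rho0 n) := by group
          _ = g0.2.1 * g0.2.1 * p j := by rw [rho0_mul_rho0, mul_one]
      have hodd : ∃ i : Fin h, ¬ 2 ∣ Function.minimalPeriod ⇑g0.1 i := by
        by_contra hall2
        push_neg at hall2
        have h2Y : (2 : ℕ) ∣ Finset.univ.gcd fun j => (Y j).card :=
          Finset.dvd_gcd fun j _ =>
            dvd_card_of_dvd_minimalPeriod g0.1 (Y j) (hφ0 j) (fun x _ => hall2 x)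
        have h2R : (2 : ℕ) ∣ Nat.card R := by
          have hmemR : rho0 n ∈ R := by
            rw [← hg0ρ]; exact (Subgroup.mem_prod.mp hmem0.2).2
          have hdvd := Subgroup.orderOf_dvd_natCard R hmemR
          rwa [orderOf_rho0 hn] at hdvd
        have h2g : (2 : ℕ) ∣ Nat.gcd (Finset.univ.gcd fun j => (Y j).card)
            (Nat.lcm (Nat.factorial (Z kstar).card) (Nat.card R)) :=
          Nat.dvd_gcd h2Y (h2R.trans (Nat.dvd_lcm_right _ _))
        rw [hgcd] at h2g
        exact absurd (Nat.dvd_one.mp h2g) (by norm_num)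
      obtain ⟨i, hioddn⟩ := hodd
      set ℓ := Function.minimalPeriod ⇑g0.1 i with hℓdef
      have hfix : ((g0.1) ^ ℓ) i = i := by
        have h := Function.isPeriodicPt_minimalPeriod ⇑g0.1 i
        rw [Equiv.Perm.coe_pow]; exact h
      have hiter := profile_pow_rel rel0 ℓ i
      rw [hfix] at hiter
      obtain ⟨mℓ, hmℓ⟩ : ∃ m', ℓ = 2 * m' + 1 := ⟨ℓ / 2, by omega⟩
      have hψℓ : g0.2.1 ^ ℓ = g0.2.1 := by
        rw [hmℓ, pow_succ, pow_mul]
        have h2 : g0.2.1 ^ 2 = 1 := by rw [pow_two]; exact hsq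
        rw [h2, one_pow, one_mul]
      have hρℓ : (rho0 n) ^ ℓ = rho0 n := by
        rw [hmℓ, pow_succ, pow_mul]
        have h2 : (rho0 n) ^ 2 = 1 := by rw [pow_two]; exact rho0_mul_rho0 n
        rw [h2, one_pow, one_mul]
      rw [hψℓ, hρℓ] at hiter
      have hconj : IsConj (rho0 n) g0.2.1 := by
        rw [isConj_iff]
        refine ⟨p i, ?_⟩
        have h1 : g0.2.1 * (p i * rho0 n) = p i := by rw [← mul_assoc]; exact hiter.symm
        have h2 : g0.2.1 = p i * (p i * rho0 n)⁻¹ := eq_mul_inv_of_mul_eq h1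
        rw [h2, mul_inv_rev, rho0_inv]
        group
      refine ⟨g0.2.1, hconj, ?_⟩
      intro g hgU hgs
      have hmemg := Subgroup.mem_prod.mp hgU
      have hgZ : g.2.1 ∈ permStab Z := (Subgroup.mem_prod.mp hmemg.2).1
      have hgR : g.2.2 ∈ R := (Subgroup.mem_prod.mp hmemg.2).2
      rcases mem_omega_cases (hR hgR) with hρ1 | hρρ
      · left
        refine ⟨?_, hρ1⟩
        apply keyA g.1 g.2.1 hmemg.1 hgZ
        intro j
        have h1 := gact_rel hgs j
        rwa [hρ1, mul_one] at h1
      · right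
        refine ⟨?_, hρρ⟩
        have relg : ∀ j, p (g.1 j) = g.2.1 * p j * rho0 n := by
          intro j
          have h1 := gact_rel hgs j
          rwa [hρρ] at h1
        have hψdiff : g.2.1 * g0.2.1⁻¹ = 1 := by
          apply keyA (g.1 * g0.1⁻¹) _ (mul_mem hmemg.1 (inv_mem hφ0))
            (mul_mem hgZ (inv_mem hψ0Z))
          intro j
          have hinvrel : p (g0.1⁻¹ j) = g0.2.1⁻¹ * p j * (rho0 n)⁻¹ := by
            have h1 := rel0 (g0.1⁻¹ j)
            rw [← Equiv.Perm.mul_apply, mul_inv_cancel, Equiv.Perm.one_apply] at h1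
            rw [h1]
            group
          rw [Equiv.Perm.mul_apply, relg, hinvrel]
          group
        exact mul_inv_eq_one.mp hψdiff
    · refine ⟨rho0 n, IsConj.refl _, ?_⟩
      intro g hgU hgs
      have hmemg := Subgroup.mem_prod.mp hgU
      have hgR : g.2.2 ∈ R := (Subgroup.mem_prod.mp hmemg.2).2
      rcases mem_omega_cases (hR hgR) with hρ1 | hρρ
      · left
        refine ⟨?_, hρ1⟩
        apply keyA g.1 g.2.1 hmemg.1 (Subgroup.mem_prod.mp hmemg.2).1
        intro j
        have h1 := gact_rel hgs j
        rwa [hρ1, mul_one] at h1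
      · exact absurd ⟨g, hgU, hgs, hρρ⟩ hex

end Statement5Aux

/-- Theorem `regular`: `V(Y) × W(Z) × R` is a regular subgroup of
`G = S_h × S_n × Ω` iff `gcd(gcd(|Y_1|,…,|Y_s|), lcm((|Z_{k*}|)!, |R|)) = 1`;
in particular `G` itself is regular iff `gcd(h, n!) = 1`. -/
theorem statement5 {h n s t : ℕ} (hh : 2 ≤ h) (hn : 2 ≤ n)
    (Y : Fin s → Finset (Fin h)) (hY : IsPartition Y)
    (Z : Fin t → Finset (Fin n)) (hZ : IsPartition Z)
    (kstar : Fin t) (hks : ∀ k, (Z k).card ≤ (Z kstar).card)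
    (R : Subgroup (Equiv.Perm (Fin n))) (hR : R ≤ OmegaGrp n) :
    (RegularSubgroup ((permStab Y).prod ((permStab Z).prod R)) ↔
      Nat.gcd (Finset.univ.gcd fun j => (Y j).card)
        (Nat.lcm (Nat.factorial (Z kstar).card) (Nat.card R)) = 1) ∧
    (RegularSubgroup (bigG n h) ↔ Nat.gcd h (Nat.factorial n) = 1) := by
  constructor
  · exact key_regular hn Y hY Z hZ kstar hks R hR
  · have hYpart : IsPartition (fun _ : Fin 1 => (Finset.univ : Finset (Fin h))) :=
      ⟨fun _ => ⟨⟨0, by omega⟩, Finset.mem_univ _⟩,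
        fun j k hjk => absurd (Subsingleton.elim j k) hjk,
        fun _ => ⟨0, Finset.mem_univ _⟩⟩
    have hZpart : IsPartition (fun _ : Fin 1 => (Finset.univ : Finset (Fin n))) :=
      ⟨fun _ => ⟨⟨0, by omega⟩, Finset.mem_univ _⟩,
        fun j k hjk => absurd (Subsingleton.elim j k) hjk,
        fun _ => ⟨0, Finset.mem_univ _⟩⟩
    have htop1 : permStab (fun _ : Fin 1 => (Finset.univ : Finset (Fin h))) = ⊤ := by
      rw [eq_top_iff]
      intro φ _ j
      exact Finset.image_univ_equiv φ
    have htop2 : permStab (fun _ : Fin 1 => (Finset.univ : Finset (Fin n))) = ⊤ := by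
      rw [eq_top_iff]
      intro φ _ j
      exact Finset.image_univ_equiv φ
    have hG : bigG n h = (permStab (fun _ : Fin 1 => (Finset.univ : Finset (Fin h)))).prod
        ((permStab (fun _ : Fin 1 => (Finset.univ : Finset (Fin n)))).prod (OmegaGrp n)) := by
      rw [bigG, htop1, htop2]
    rw [hG, key_regular hn _ hYpart _ hZpart 0 (fun _ => le_rfl) (OmegaGrp n) le_rfl]
    have h1 : (Finset.univ.gcd fun _ : Fin 1 => (Finset.univ : Finset (Fin h)).card) = h := by
      have hc : (Finset.univ : Finset (Fin h)).card = h := by simp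
      apply Nat.dvd_antisymm
      · have hd := Finset.gcd_dvd (f := fun _ : Fin 1 => (Finset.univ : Finset (Fin h)).card)
          (Finset.mem_univ (0 : Fin 1))
        simpa [hc] using hd
      · exact Finset.dvd_gcd fun j _ => by simp [hc]
    have h3 : Nat.lcm (Nat.factorial (Finset.univ : Finset (Fin n)).card)
        (Nat.card (OmegaGrp n)) = Nat.factorial n := by
      rw [card_omega hn]
      have hc : (Finset.univ : Finset (Fin n)).card = n := by simp
      rw [hc]
      exact Nat.dvd_antisymm (Nat.lcm_dvd dvd_rfl (Nat.dvd_factorial (by norm_num) hn))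
        (Nat.dvd_lcm_left _ _)
    rw [h1, h3]
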